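/- Let $\lambda > 0$, $0 < d < \pi/2$, $|y| \le d$, and let $x > 0$ satisfy $\exp\left(\frac{\pi}{2}\sinh(x)\cos(d)\right) \ge 2\lambda$. Then $\left|\exp\left(\frac{\pi}{2}\sinh(x+\mathrm{i}y)\right) + \lambda\right| \ge \frac{1}{2}\exp\left(\frac{\pi}{2}\sinh(x)\cos(y)\right)$, and consequently $\frac{|\exp(\frac{\alpha\pi}{2}\sinh(x+\mathrm{i}y))|}{|\exp(\frac{\pi}{2}\sinh(x+\mathrm{i}y)) + \lambda|} \le 2\exp\left(-\frac{(1-\alpha)\pi\cos(d)}{2}\sinh(x)\right)$ for any $\alpha \in (0,1)$. -/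

import Mathlib

open Real Complex

lemma re_mul_sinh (c x y : ℝ) :
    ((c : ℂ) * Complex.sinh (x + y * Complex.I)).re = c * (Real.sinh x * Real.cos y) := by
  simp [Complex.sinh_add, Complex.sinh_mul_I, Complex.cosh_mul_I, Complex.mul_re,
    Complex.add_re, Complex.add_im, Complex.mul_im, Complex.sinh_ofReal_re,
    Complex.sinh_ofReal_im, Complex.cosh_ofReal_re, Complex.cosh_ofReal_im,
    Complex.cos_ofReal_re, Complex.cos_ofReal_im, Complex.sin_ofReal_re,
    Complex.sin_ofReal_im]

theorem decay_right_in_strip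
    (lam d : ℝ) (hlam : 0 < lam) (hd : 0 < d) (hd2 : d < π/2)
    (y : ℝ) (hy : |y| ≤ d) (x : ℝ) (hx : 0 < x)
    (hbig : 2 * lam ≤ Real.exp (π/2 * Real.sinh x * Real.cos d)) :
    (1/2) * Real.exp (π/2 * Real.sinh x * Real.cos y)
        ≤ ‖Complex.exp ((π/2) * Complex.sinh (x + y * Complex.I)) + lam‖
    ∧ ∀ α : ℝ, α ∈ Set.Ioo (0:ℝ) 1 →
        ‖Complex.exp ((α * π / 2) * Complex.sinh (x + y * Complex.I))‖
            / ‖Complex.exp ((π/2) * Complex.sinh (x + y * Complex.I)) + lam‖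
          ≤ 2 * Real.exp (-((1 - α) * π * Real.cos d / 2) * Real.sinh x) := by
  have hs : 0 < Real.sinh x := by rwa [← Real.sinh_zero, Real.sinh_lt_sinh]
  have hcos : Real.cos d ≤ Real.cos y := by
    rw [← Real.cos_abs y]
    apply Real.cos_le_cos_of_nonneg_of_le_pi (abs_nonneg y) (by linarith [Real.pi_pos]) hy
  have hexps : Real.exp (π/2 * Real.sinh x * Real.cos d)
      ≤ Real.exp (π/2 * Real.sinh x * Real.cos y) := by
    apply Real.exp_le_exp.2
    have : 0 ≤ π/2 * Real.sinh x := by positivity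
    nlinarith
  have habs1 : ‖Complex.exp ((π/2 : ℂ) * Complex.sinh (x + y * Complex.I))‖
      = Real.exp (π/2 * Real.sinh x * Real.cos y) := by
    rw [Complex.norm_exp]
    congr 1
    have := re_mul_sinh (π/2) x y
    push_cast at this ⊢
    rw [this]; ring
  have hmain : (1/2) * Real.exp (π/2 * Real.sinh x * Real.cos y)
      ≤ ‖Complex.exp ((π/2) * Complex.sinh (x + y * Complex.I)) + lam‖ := by
    have htri : ‖Complex.exp ((π/2 : ℂ) * Complex.sinh (x + y * Complex.I))‖
        - ‖(lam : ℂ)‖ ≤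
        ‖Complex.exp ((π/2) * Complex.sinh (x + y * Complex.I)) + lam‖ := by
      have h := norm_add_le
        (Complex.exp ((π/2 : ℂ) * Complex.sinh (x + y * Complex.I)) + lam) (-(lam : ℂ))
      simp only [add_neg_cancel_right, norm_neg] at h
      linarith
    rw [habs1] at htri
    rw [Complex.norm_real, Real.norm_eq_abs, abs_of_pos hlam] at htri
    linarith
  refine ⟨hmain, fun α hα => ?_⟩
  obtain ⟨hα0, hα1⟩ := hα
  have habs2 : ‖Complex.exp ((α * π / 2 : ℂ) * Complex.sinh (x + y * Complex.I))‖
      = Real.exp (α * π / 2 * (Real.sinh x * Real.cos y)) := by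
    rw [Complex.norm_exp]
    congr 1
    have := re_mul_sinh (α * π / 2) x y
    push_cast at this ⊢
    rw [this]
  have hpos : 0 < ‖Complex.exp ((π/2) * Complex.sinh (x + y * Complex.I)) + lam‖ := by
    have : (0:ℝ) < (1/2) * Real.exp (π/2 * Real.sinh x * Real.cos y) := by positivity
    linarith
  rw [div_le_iff₀ hpos]
  calc ‖Complex.exp ((α * π / 2 : ℂ) * Complex.sinh (x + y * Complex.I))‖
      = Real.exp (α * π / 2 * (Real.sinh x * Real.cos y)) := habs2
    _ ≤ 2 * Real.exp (-((1 - α) * π * Real.cos d / 2) * Real.sinh x) *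
        ((1/2) * Real.exp (π/2 * Real.sinh x * Real.cos y)) := by
        rw [show 2 * Real.exp (-((1 - α) * π * Real.cos d / 2) * Real.sinh x) *
            ((1/2) * Real.exp (π/2 * Real.sinh x * Real.cos y)) =
            Real.exp (-((1 - α) * π * Real.cos d / 2) * Real.sinh x +
              π/2 * Real.sinh x * Real.cos y) by rw [Real.exp_add]; ring]
        apply Real.exp_le_exp.2
        have h1α : 0 < 1 - α := by linarith
        nlinarith [mul_le_mul_of_nonneg_left hcos (by positivity : (0:ℝ) ≤ (1-α)*(π/2)*Real.sinh x)]
    _ ≤ 2 * Real.exp (-((1 - α) * π * Real.cos d / 2) * Real.sinh x) *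
        ‖Complex.exp ((π/2) * Complex.sinh (x + y * Complex.I)) + lam‖ := by
        apply mul_le_mul_of_nonneg_left hmain (by positivity)
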